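/- arXiv:1703.04715 — 2 statements merged into one kernel-verified Lean document; each statement's English description precedes it below -/
import Mathlib

section
/- Fix k ≥ 2. Let r_j(m,n) count overpartitions of n with m overlined parts, all parts ≤ j, satisfying the D_k conditions (an overlined b̄ forbids non-overlined b,...,b+k−2 and overlined (b+1)̄,...,(b+k−1)̄), and with no overlined part exceeding j−k+1. Let R_j(a,q) = ∑_{m,n} r_j(m,n) a^m q^n, with R_0 = 1. Then for all j ≥ k, R_j(a,q) = R_{j−1}(a,q)/(1−q^j) + a q^{j−k+1} R_{j−k}(a,q)/(1−q^j), and R_j(a,q) = 1/(q;q)_j for 0 ≤ j < k. -/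
/-- An overpartition of `n`: a partition (the multiset `parts` of non-overlined parts)
together with a set `over` of overlined parts (each part value may be overlined at
most once, so `over` is a finset), all parts positive, with total sum `n`. -/
structure Overpartition (n : ℕ) where
  overlined : Finset ℕ
  parts : Multiset ℕ
  over_pos : ∀ b ∈ overlined, 0 < b
  parts_pos : ∀ b ∈ parts, 0 < b
  total : overlined.sum id + parts.sum = n

/-- The conditions of the main overpartition theorem: an overlined part `b̄` forbids
the non-overlined parts `b, b+1, …, b+k−2` and the overlined parts
`b+1, b+2, …, b+k−1`. -/
def DCond (k : ℕ) {n : ℕ} (p : Overpartition n) : Prop :=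
  (∀ b ∈ p.overlined, ∀ c ∈ p.parts, ¬ (b ≤ c ∧ c + 2 ≤ b + k)) ∧
  (∀ b ∈ p.overlined, ∀ c ∈ p.overlined, ¬ (b + 1 ≤ c ∧ c + 1 ≤ b + k))

/-- `DCount k m n` is the number `D_k(m,n)` of overpartitions of `n` with exactly `m`
overlined parts satisfying the conditions `DCond k`. -/
noncomputable def DCount (k m n : ℕ) : ℕ :=
  Nat.card {p : Overpartition n // DCond k p ∧ p.overlined.card = m}

/-- `r_j(m,n)`: overpartitions of `n` with `m` overlined parts, all parts `≤ j`,
satisfying the `D_k` conditions, and with every overlined part `≤ j − k + 1`. -/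
noncomputable def RCount (k j m n : ℕ) : ℕ :=
  Nat.card {p : Overpartition n // DCond k p ∧ (∀ c ∈ p.parts, c ≤ j) ∧
    (∀ b ∈ p.overlined, b ≤ j ∧ b + k ≤ j + 1) ∧ p.overlined.card = m}

/-- `R_j(a,q) = ∑_{m,n} r_j(m,n) aᵐ qⁿ` as a power series in `q` with coefficients
in `ℤ[a]` (note `m ≤ n` whenever `r_j(m,n) ≠ 0`). -/
noncomputable def Rgf (k j : ℕ) : PowerSeries (Polynomial ℤ) :=
  PowerSeries.mk fun n => ∑ m ∈ Finset.range (n + 1),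
    Polynomial.C (RCount k j m n : ℤ) * Polynomial.X ^ m

namespace OPAux

lemma op_ext {n : ℕ} {p q : Overpartition n} (h1 : p.overlined = q.overlined)
    (h2 : p.parts = q.parts) : p = q := by
  cases p; cases q; simp_all

lemma mcard_le_sum (s : Multiset ℕ) (h : ∀ x ∈ s, 0 < x) : Multiset.card s ≤ s.sum := by
  induction s using Multiset.induction with
  | empty => simp
  | cons a s ih =>
    simp only [Multiset.card_cons, Multiset.sum_cons]
    have h1 : 0 < a := h a (Multiset.mem_cons_self a s)
    have h2 := ih (fun x hx => h x (Multiset.mem_cons_of_mem hx))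
    omega

lemma over_sum_le {n : ℕ} (p : Overpartition n) : p.overlined.sum id ≤ n := by
  have := p.total; omega

lemma parts_sum_le {n : ℕ} (p : Overpartition n) : p.parts.sum ≤ n := by
  have := p.total; omega

lemma mem_parts_le {n : ℕ} (p : Overpartition n) {c : ℕ} (hc : c ∈ p.parts) : c ≤ n :=
  le_trans (Multiset.le_sum_of_mem hc) (parts_sum_le p)

lemma over_card_le {n : ℕ} (p : Overpartition n) : p.overlined.card ≤ n := by
  have h : p.overlined.card • 1 ≤ p.overlined.sum id :=
    Finset.card_nsmul_le_sum p.overlined id 1 (fun x hx => p.over_pos x hx)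
  have := over_sum_le p
  simpa using le_trans h this

instance finiteOP (n : ℕ) : Finite (Overpartition n) := by
  classical
  let f : Overpartition n →
      {s // s ∈ (Finset.range (n+1)).powerset} ×
      {t // t ∈ (n • (Finset.range (n+1)).val).powerset.toFinset} := fun p =>
    (⟨p.overlined, by
        simp only [Finset.mem_powerset]
        intro b hb
        have h1 : b ≤ n := le_trans (Finset.single_le_sum (f := id)
          (fun i _ => Nat.zero_le _) hb) (over_sum_le p)
        simp [Finset.mem_range]; omega⟩,
     ⟨p.parts, by
        simp only [Multiset.mem_toFinset, Multiset.mem_powerset, Multiset.le_iff_count]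
        intro a
        rcases Nat.eq_zero_or_pos (Multiset.count a p.parts) with h | h
        · simp [h]
        · have ha : a ∈ p.parts := Multiset.count_pos.mp h
          have h1 : a ≤ n := mem_parts_le p ha
          have h2 : Multiset.count a p.parts ≤ Multiset.card p.parts :=
            Multiset.count_le_card a p.parts
          have h3 : Multiset.card p.parts ≤ p.parts.sum :=
            mcard_le_sum _ (fun x hx => p.parts_pos x hx)
          have h4 := parts_sum_le p
          rw [Multiset.count_nsmul]
          have : a ∈ (Finset.range (n+1)).val := by simp [Finset.mem_range]; omega
          have h5 : 1 ≤ Multiset.count a (Finset.range (n+1)).val :=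
            Multiset.one_le_count_iff_mem.mpr this
          calc Multiset.count a p.parts ≤ n := by omega
          _ ≤ n * Multiset.count a (Finset.range (n+1)).val := by nlinarith⟩)
  have hf : Function.Injective f := by
    intro p q h
    simp only [f, Prod.mk.injEq, Subtype.mk.injEq] at h
    exact op_ext h.1 h.2
  exact Finite.of_injective f hf

end OPAux
namespace OPAux

/-- the defining predicate of `RCount` -/
def RP (k j m n : ℕ) (p : Overpartition n) : Prop :=
  DCond k p ∧ (∀ c ∈ p.parts, c ≤ j) ∧
    (∀ b ∈ p.overlined, b ≤ j ∧ b + k ≤ j + 1) ∧ p.overlined.card = m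

lemma rcount_eq (k j m n : ℕ) : RCount k j m n = Nat.card {p : Overpartition n // RP k j m n p} := rfl

lemma rcount_eq_zero_of_lt {k j m n : ℕ} (h : n < m) : RCount k j m n = 0 := by
  rw [rcount_eq, Nat.card_eq_zero]
  left
  constructor
  rintro ⟨p, hp⟩
  have := over_card_le p
  have := hp.2.2.2
  omega

/-- the empty overpartition -/
def empty (n : ℕ) (h : n = 0) : Overpartition n :=
  ⟨∅, 0, by simp, by simp, by simp [h]⟩

lemma rcount_zero (k m n : ℕ) : RCount k 0 m n = if m = 0 ∧ n = 0 then 1 else 0 := by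
  split_ifs with h
  · rcases h with ⟨hm, hn⟩
    subst hm; subst hn
    rw [rcount_eq, Nat.card_eq_one_iff_unique]
    constructor
    · constructor
      rintro ⟨p, hp⟩ ⟨q, hq⟩
      have hp1 : p.overlined = ∅ := Finset.card_eq_zero.mp hp.2.2.2
      have hq1 : q.overlined = ∅ := Finset.card_eq_zero.mp hq.2.2.2
      have hp2 : p.parts = 0 := by
        rw [Multiset.eq_zero_iff_forall_notMem]
        intro a ha; have := p.parts_pos a ha; have := hp.2.1 a ha; omega
      have hq2 : q.parts = 0 := by
        rw [Multiset.eq_zero_iff_forall_notMem]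
        intro a ha; have := q.parts_pos a ha; have := hq.2.1 a ha; omega
      exact Subtype.ext (op_ext (hp1.trans hq1.symm) (hp2.trans hq2.symm))
    · exact ⟨⟨empty 0 rfl, ⟨⟨by simp [empty], by simp [empty]⟩, by simp [empty], by simp [empty], by simp [empty]⟩⟩⟩
  · rw [rcount_eq, Nat.card_eq_zero]
    left; constructor
    rintro ⟨p, hp⟩
    have hp2 : p.parts = 0 := by
      rw [Multiset.eq_zero_iff_forall_notMem]
      intro a ha; have := p.parts_pos a ha; have := hp.2.1 a ha; omega
    have hp1 : p.overlined = ∅ := by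
      rw [Finset.eq_empty_iff_forall_notMem]
      intro a ha; have := p.over_pos a ha; have := (hp.2.2.1 a ha).1; omega
    have := p.total
    rw [hp1, hp2] at this
    simp at this
    have := hp.2.2.2
    rw [hp1] at this
    simp at this
    omega

end OPAux
namespace OPAux

lemma cardA {k j m n : ℕ} (hjn : j ≤ n) (hj : 1 ≤ j) :
    Nat.card {p : Overpartition n // RP k j m n p ∧ j ∈ p.parts} = RCount k j m (n - j) := by
  classical
  rw [rcount_eq]
  apply Nat.card_congr
  refine
    { toFun := fun x => by
        rcases x with ⟨p, hp, hpj⟩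
        refine ⟨⟨p.overlined, p.parts.erase j, p.over_pos,
          fun b hb => p.parts_pos b (Multiset.mem_of_mem_erase hb), ?_⟩, ?_, ?_, ?_, ?_⟩
        · have h1 : p.parts.sum = j + (p.parts.erase j).sum := by
            conv_lhs => rw [← Multiset.cons_erase hpj]
            simp
          have := p.total; omega
        · exact ⟨fun b hb c hc => hp.1.1 b hb c (Multiset.mem_of_mem_erase hc), hp.1.2⟩
        · exact fun c hc => hp.2.1 c (Multiset.mem_of_mem_erase hc)
        · exact hp.2.2.1
        · exact hp.2.2.2
      invFun := fun x => by
        rcases x with ⟨q, hq⟩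
        refine ⟨⟨q.overlined, j ::ₘ q.parts, q.over_pos, ?_, ?_⟩, ⟨⟨?_, hq.1.2⟩, ?_, hq.2.2.1, hq.2.2.2⟩, ?_⟩
        · intro b hb
          rcases Multiset.mem_cons.mp hb with h | h
          · omega
          · exact q.parts_pos b h
        · have := q.total; simp only [Multiset.sum_cons]; omega
        · intro b hb c hc
          rcases Multiset.mem_cons.mp hc with h | h
          · subst h
            have := (hq.2.2.1 b hb).2
            omega
          · exact hq.1.1 b hb c h
        · intro c hc
          rcases Multiset.mem_cons.mp hc with h | h
          · omega
          · exact hq.2.1 c h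
        · exact Multiset.mem_cons_self j q.parts
      left_inv := by
        rintro ⟨p, hp, hpj⟩
        apply Subtype.ext
        apply op_ext
        · rfl
        · exact Multiset.cons_erase hpj
      right_inv := by
        rintro ⟨q, hq⟩
        apply Subtype.ext
        apply op_ext
        · rfl
        · exact Multiset.erase_cons_head j q.parts }

end OPAux
namespace OPAux

lemma cardC {k j m n : ℕ} (hk : 2 ≤ k) (hj : 1 ≤ j) :
    Nat.card {p : Overpartition n // RP k j m n p ∧ j ∉ p.parts ∧ j - k + 1 ∉ p.overlined} =
      RCount k (j - 1) m n := by
  rw [rcount_eq]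
  apply Nat.card_congr
  apply Equiv.subtypeEquivRight
  intro p
  constructor
  · rintro ⟨⟨hD, hparts, hover, hcard⟩, hjp, hjo⟩
    refine ⟨hD, ?_, ?_, hcard⟩
    · intro c hc
      have h1 := hparts c hc
      have : c ≠ j := fun h => hjp (h ▸ hc)
      omega
    · intro b hb
      have h1 := hover b hb
      have h2 := p.over_pos b hb
      have : b ≠ j - k + 1 := fun h => hjo (h ▸ hb)
      omega
  · rintro ⟨hD, hparts, hover, hcard⟩
    refine ⟨⟨hD, ?_, ?_, hcard⟩, ?_, ?_⟩
    · intro c hc; have := hparts c hc; omega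
    · intro b hb; have := hover b hb; omega
    · intro hc; have := hparts j hc; omega
    · intro hb
      have := (hover _ hb).2
      have := p.over_pos _ hb
      omega

lemma cardB {k j m n : ℕ} (hk : 2 ≤ k) (hkj : k ≤ j) (hm : 1 ≤ m) (hn : j - k + 1 ≤ n) :
    Nat.card {p : Overpartition n // RP k j m n p ∧ j ∉ p.parts ∧ j - k + 1 ∈ p.overlined} =
      RCount k (j - k) (m - 1) (n - (j - k + 1)) := by
  classical
  rw [rcount_eq]
  apply Nat.card_congr
  refine
    { toFun := fun x => by
        rcases x with ⟨p, hp, hjp, hbo⟩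
        refine ⟨⟨p.overlined.erase (j - k + 1), p.parts,
          fun b hb => p.over_pos b (Finset.mem_of_mem_erase hb), p.parts_pos, ?_⟩,
          ⟨⟨?_, ?_⟩, ?_, ?_, ?_⟩⟩
        · have h1 : (p.overlined.erase (j - k + 1)).sum id + id (j - k + 1) = p.overlined.sum id :=
            Finset.sum_erase_add p.overlined id hbo
          have h2 := p.total
          simp only [id] at h1 h2 ⊢
          omega
        · exact fun b hb c hc => hp.1.1 b (Finset.mem_of_mem_erase hb) c hc
        · exact fun b hb c hc =>
            hp.1.2 b (Finset.mem_of_mem_erase hb) c (Finset.mem_of_mem_erase hc)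
        · intro c hc
          have h1 := hp.2.1 c hc
          have h2 : c ≠ j := fun h => hjp (h ▸ hc)
          have h3 := hp.1.1 (j - k + 1) hbo c hc
          omega
        · intro b hb
          have hbne : b ≠ (j - k + 1) := Finset.ne_of_mem_erase hb
          have hbm : b ∈ p.overlined := Finset.mem_of_mem_erase hb
          have h1 := hp.2.2.1 b hbm
          have h2 := hp.1.2 (j - k + 1) hbo b hbm
          have h3 := hp.1.2 b hbm (j - k + 1) hbo
          have h4 := p.over_pos b hbm
          omega
        · rw [Finset.card_erase_of_mem hbo, hp.2.2.2]
      invFun := fun x => by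
        rcases x with ⟨q, hq⟩
        have hq0 : (j - k + 1) ∉ q.overlined := by
          intro h
          have := (hq.2.2.1 (j - k + 1) h).2
          omega
        refine ⟨⟨insert (j - k + 1) q.overlined, q.parts, ?_, q.parts_pos, ?_⟩,
          ⟨⟨?_, ?_⟩, ?_, ?_, ?_⟩, ?_, ?_⟩
        · intro b hb
          rcases Finset.mem_insert.mp hb with h | h
          · omega
          · exact q.over_pos b h
        · rw [Finset.sum_insert hq0]
          have h2 := q.total
          simp only [id] at h2 ⊢
          omega
        · intro b hb c hc
          rcases Finset.mem_insert.mp hb with h | h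
          · subst h
            have h1 := hq.2.1 c hc
            omega
          · exact hq.1.1 b h c hc
        · intro b hb c hc
          rcases Finset.mem_insert.mp hb with h | h <;>
            rcases Finset.mem_insert.mp hc with h' | h'
          · subst h; subst h'; omega
          · subst h
            have := (hq.2.2.1 c h').2
            omega
          · subst h'
            have := (hq.2.2.1 b h).2
            omega
          · exact hq.1.2 b h c h'
        · intro c hc
          have := hq.2.1 c hc
          omega
        · intro b hb
          rcases Finset.mem_insert.mp hb with h | h
          · omega
          · have := hq.2.2.1 b h; omega
        · rw [Finset.card_insert_of_notMem hq0, hq.2.2.2]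
          omega
        · intro h
          have := hq.2.1 j h
          omega
        · exact Finset.mem_insert_self (j - k + 1) q.overlined
      left_inv := by
        rintro ⟨p, hp, hjp, hbo⟩
        exact Subtype.ext (op_ext (Finset.insert_erase hbo) rfl)
      right_inv := by
        rintro ⟨q, hq⟩
        have hq0 : (j - k + 1) ∉ q.overlined := by
          intro h
          have := (hq.2.2.1 (j - k + 1) h).2
          omega
        exact Subtype.ext (op_ext (Finset.erase_insert hq0) rfl) }

end OPAux
namespace OPAux

lemma card_split {α : Type*} [Finite α] (p q : α → Prop) :
    Nat.card {x // p x} = Nat.card {x // p x ∧ q x} + Nat.card {x // p x ∧ ¬ q x} := by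
  classical
  have e1 : {x : {x // p x} // q x.1} ≃ {x // p x ∧ q x} :=
    Equiv.subtypeSubtypeEquivSubtypeInter p q
  have e2 : {x : {x // p x} // ¬ q x.1} ≃ {x // p x ∧ ¬ q x} :=
    Equiv.subtypeSubtypeEquivSubtypeInter p (fun x => ¬ q x)
  calc Nat.card {x // p x}
      = Nat.card ({x : {x // p x} // q x.1} ⊕ {x : {x // p x} // ¬ q x.1}) :=
        (Nat.card_congr (Equiv.sumCompl _)).symm
    _ = _ := by rw [Nat.card_sum, Nat.card_congr e1, Nat.card_congr e2]

lemma rcount_rec {k j m n : ℕ} (hk : 2 ≤ k) (hj : 1 ≤ j) :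
    RCount k j m n =
      (if j ≤ n then RCount k j m (n - j) else 0) +
      (if k ≤ j ∧ 1 ≤ m ∧ j - k + 1 ≤ n then RCount k (j - k) (m - 1) (n - (j - k + 1)) else 0) +
      RCount k (j - 1) m n := by
  classical
  have hA : Nat.card {p : Overpartition n // RP k j m n p ∧ j ∈ p.parts} =
      (if j ≤ n then RCount k j m (n - j) else 0) := by
    split_ifs with h
    · exact cardA h hj
    · rw [Nat.card_eq_zero]
      left; constructor
      rintro ⟨p, hp, hjp⟩
      have := mem_parts_le p hjp
      omega
  have hB : Nat.card {p : Overpartition n // (RP k j m n p ∧ j ∉ p.parts) ∧ j - k + 1 ∈ p.overlined} =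
      (if k ≤ j ∧ 1 ≤ m ∧ j - k + 1 ≤ n then RCount k (j - k) (m - 1) (n - (j - k + 1)) else 0) := by
    have e : {p : Overpartition n // (RP k j m n p ∧ j ∉ p.parts) ∧ j - k + 1 ∈ p.overlined} ≃
        {p : Overpartition n // RP k j m n p ∧ j ∉ p.parts ∧ j - k + 1 ∈ p.overlined} :=
      Equiv.subtypeEquivRight (by tauto)
    rw [Nat.card_congr e]
    split_ifs with h
    · exact cardB hk h.1 h.2.1 h.2.2
    · rw [Nat.card_eq_zero]
      left; constructor
      rintro ⟨p, hp, hjp, hbo⟩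
      push_neg at h
      have h1 := hp.2.2.1 _ hbo
      have h2 : j - k + 1 ≤ p.overlined.sum id :=
        Finset.single_le_sum (f := id) (fun i _ => Nat.zero_le _) hbo
      have h3 := over_sum_le p
      have h4 : 1 ≤ p.overlined.card := Finset.card_pos.mpr ⟨_, hbo⟩
      have h5 := hp.2.2.2
      omega
  have hC : Nat.card {p : Overpartition n // (RP k j m n p ∧ j ∉ p.parts) ∧ j - k + 1 ∉ p.overlined} =
      RCount k (j - 1) m n := by
    have e : {p : Overpartition n // (RP k j m n p ∧ j ∉ p.parts) ∧ j - k + 1 ∉ p.overlined} ≃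
        {p : Overpartition n // RP k j m n p ∧ j ∉ p.parts ∧ j - k + 1 ∉ p.overlined} :=
      Equiv.subtypeEquivRight (by tauto)
    rw [Nat.card_congr e]
    exact cardC hk hj
  rw [rcount_eq, card_split (RP k j m n) (fun p => j ∈ p.parts),
      card_split (fun p => RP k j m n p ∧ ¬ j ∈ p.parts) (fun p => j - k + 1 ∈ p.overlined),
      hA, hB, hC, add_assoc]

end OPAux
namespace OPAux

open PowerSeries Polynomial

lemma coeff_Rgf (k j n : ℕ) :
    (PowerSeries.coeff n) (Rgf k j) =
      ∑ m ∈ Finset.range (n + 1), Polynomial.C (RCount k j m n : ℤ) * Polynomial.X ^ m := by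
  simp [Rgf]

lemma coeff_Rgf_ext (k j n N : ℕ) (h : n ≤ N) :
    (PowerSeries.coeff n) (Rgf k j) =
      ∑ m ∈ Finset.range (N + 1), Polynomial.C (RCount k j m n : ℤ) * Polynomial.X ^ m := by
  rw [coeff_Rgf]
  apply Finset.sum_subset
  · exact Finset.range_subset_range.mpr (by omega)
  · intro x hx hxn
    simp only [Finset.mem_range] at hx hxn
    rw [rcount_eq_zero_of_lt (by omega)]
    simp

lemma PS_rec (k j : ℕ) (hk : 2 ≤ k) (hj : 1 ≤ j) :
    (1 - (PowerSeries.X : PowerSeries (Polynomial ℤ)) ^ j) * Rgf k j =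
      Rgf k (j - 1) + (if k ≤ j then
        PowerSeries.C Polynomial.X * PowerSeries.X ^ (j - k + 1) * Rgf k (j - k)
        else 0) := by
  ext n
  rw [sub_mul, one_mul, map_sub, map_add,
    mul_comm ((PowerSeries.X : PowerSeries (Polynomial ℤ)) ^ j), PowerSeries.coeff_mul_X_pow']
  have key : ∀ m : ℕ, (RCount k j m n : ℤ) =
      (if j ≤ n then (RCount k j m (n - j) : ℤ) else 0) +
      (if k ≤ j ∧ 1 ≤ m ∧ j - k + 1 ≤ n then (RCount k (j - k) (m - 1) (n - (j - k + 1)) : ℤ) else 0) +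
      (RCount k (j - 1) m n : ℤ) := by
    intro m
    rw [rcount_rec hk hj (m := m) (n := n)]
    push_cast
    split_ifs <;> push_cast <;> ring
  rw [coeff_Rgf k j n]
  have expand : ∑ m ∈ Finset.range (n + 1), Polynomial.C (RCount k j m n : ℤ) * Polynomial.X ^ m =
      (∑ m ∈ Finset.range (n + 1),
        Polynomial.C (if j ≤ n then (RCount k j m (n - j) : ℤ) else 0) * Polynomial.X ^ m) +
      (∑ m ∈ Finset.range (n + 1),
        Polynomial.C (if k ≤ j ∧ 1 ≤ m ∧ j - k + 1 ≤ n then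
          (RCount k (j - k) (m - 1) (n - (j - k + 1)) : ℤ) else 0) * Polynomial.X ^ m) +
      (∑ m ∈ Finset.range (n + 1), Polynomial.C (RCount k (j - 1) m n : ℤ) * Polynomial.X ^ m) := by
    rw [← Finset.sum_add_distrib, ← Finset.sum_add_distrib]
    apply Finset.sum_congr rfl
    intro m _
    rw [key m]
    simp only [map_add]
    ring_nf
  rw [expand, ← coeff_Rgf k (j - 1) n]
  have hA : (∑ m ∈ Finset.range (n + 1),
      Polynomial.C (if j ≤ n then (RCount k j m (n - j) : ℤ) else 0) * Polynomial.X ^ m) =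
      (if j ≤ n then (PowerSeries.coeff (n - j)) (Rgf k j) else 0) := by
    split_ifs with h
    · rw [coeff_Rgf_ext k j (n - j) n (by omega)]
    · simp
  have hB : (∑ m ∈ Finset.range (n + 1),
      Polynomial.C (if k ≤ j ∧ 1 ≤ m ∧ j - k + 1 ≤ n then
        (RCount k (j - k) (m - 1) (n - (j - k + 1)) : ℤ) else 0) * Polynomial.X ^ m) =
      (PowerSeries.coeff n) (if k ≤ j then
        PowerSeries.C Polynomial.X * PowerSeries.X ^ (j - k + 1) * Rgf k (j - k)
        else 0) := by
    by_cases hkj : k ≤ j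
    · simp only [hkj, if_true, true_and]
      rw [mul_assoc, PowerSeries.coeff_C_mul,
        mul_comm ((PowerSeries.X : PowerSeries (Polynomial ℤ)) ^ (j - k + 1)),
        PowerSeries.coeff_mul_X_pow']
      by_cases hdn : j - k + 1 ≤ n
      · simp only [hdn, if_true, and_true]
        have hn1 : 1 ≤ n := by omega
        rw [coeff_Rgf_ext k (j - k) (n - (j - k + 1)) (n - 1) (by omega)]
        rw [Finset.sum_range_succ']
        have hn2 : n - 1 + 1 = n := by omega
        simp only [Nat.le_add_left 1, if_true]
        rw [Finset.mul_sum]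
        simp only [Nat.add_sub_cancel]
        rw [hn2]
        simp only [Nat.lt_irrefl, if_neg (by omega : ¬ (1 ≤ 0))]
        simp only [map_zero, zero_mul, add_zero]
        apply Finset.sum_congr rfl
        intro m _
        rw [pow_succ]
        ring_nf
      · simp only [hdn, and_false, if_false]
        simp
    · simp only [hkj, if_false, false_and]
      simp
  rw [hA, hB]
  ring_nf

end OPAux
namespace OPAux

lemma Rgf_zero (k : ℕ) : Rgf k 0 = 1 := by
  apply PowerSeries.ext
  intro n
  rw [coeff_Rgf, PowerSeries.coeff_one]
  cases n with
  | zero =>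
    simp [rcount_zero]
  | succ n =>
    simp only [Nat.succ_ne_zero, if_false]
    apply Finset.sum_eq_zero
    intro m _
    simp [rcount_zero]

end OPAux

/-- The recursion and initial conditions for `R_j`: for `j ≥ k`,
`(1 − q^j) R_j = R_{j−1} + a q^{j−k+1} R_{j−k}`, and `R_j = 1/(q;q)_j` for `0 ≤ j < k`
(stated multiplied through by `(q;q)_j`). -/
theorem Rgf_recursion (k : ℕ) (hk : 2 ≤ k) :
    (∀ j : ℕ, k ≤ j →
      (1 - (PowerSeries.X : PowerSeries (Polynomial ℤ)) ^ j) * Rgf k j =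
        Rgf k (j - 1) +
          PowerSeries.C (R := Polynomial ℤ) Polynomial.X * PowerSeries.X ^ (j - k + 1) *
            Rgf k (j - k)) ∧
    (∀ j : ℕ, j < k →
      (∏ m ∈ Finset.range j, (1 - (PowerSeries.X : PowerSeries (Polynomial ℤ)) ^ (m + 1))) *
        Rgf k j = 1) := by
  constructor
  · intro j hj
    have h := OPAux.PS_rec k j hk (by omega)
    rwa [if_pos hj] at h
  · intro j hjk
    induction j with
    | zero => simp [OPAux.Rgf_zero]
    | succ j ih =>
      have h := OPAux.PS_rec k (j + 1) hk (by omega)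
      rw [if_neg (by omega), add_zero, Nat.add_sub_cancel] at h
      rw [Finset.prod_range_succ, mul_assoc, h]
      exact ih (by omega)
end

section
/- Let (p_n) be a sequence of positive reals with ∑ p_n divergent and ∑ p_n z^n having radius of convergence 1, and let (a_n) be a real sequence with a_n / p_n → s. Then ∑ a_n z^n has radius of convergence at least 1 and lim_{r→1⁻} (∑_{n≥0} a_n r^n)/(∑_{n≥0} p_n r^n) = s. -/
open Filter Finset Topology

/-- Appell's comparison theorem (Dienes, "The Taylor Series", p. 101).
If `(pₙ)` is a sequence of positive reals with `∑ pₙ` divergent and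
`∑ pₙ zⁿ` of radius of convergence `1`, and `aₙ / pₙ → s`, then `∑ aₙ zⁿ`
has radius of convergence at least `1` and
`(∑ aₙ rⁿ)/(∑ pₙ rⁿ) → s` as `r → 1⁻`. -/
theorem appell_comparison (p a : ℕ → ℝ) (s : ℝ)
    (hpos : ∀ n, 0 < p n)
    (hdiv : ¬ Summable p)
    (hrad : ∀ r : ℝ, |r| < 1 → Summable (fun n => p n * r ^ n))
    (hlim : Filter.Tendsto (fun n => a n / p n) Filter.atTop (nhds s)) :
    (∀ r : ℝ, |r| < 1 → Summable (fun n => a n * r ^ n)) ∧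
    Filter.Tendsto (fun r : ℝ => (∑' n, a n * r ^ n) / (∑' n, p n * r ^ n))
      (nhdsWithin 1 (Set.Iio 1)) (nhds s) := by
  -- the sequence `a n / p n` is bounded in absolute value
  obtain ⟨C, hC⟩ : ∃ C, ∀ n, |a n / p n| ≤ C := by
    have hb : BddAbove (Set.range fun n => |a n / p n|) :=
      (hlim.abs).bddAbove_range
    obtain ⟨C, hC⟩ := hb
    exact ⟨C, fun n => hC ⟨n, rfl⟩⟩
  have haC : ∀ n, |a n| ≤ C * p n := by
    intro n
    have h := hC n
    rw [abs_div, abs_of_pos (hpos n), div_le_iff₀ (hpos n)] at h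
    exact h
  -- summability of `a n * r ^ n` for `|r| < 1`
  have hsum : ∀ r : ℝ, |r| < 1 → Summable (fun n => a n * r ^ n) := by
    intro r hr
    have h1 : Summable (fun n => p n * |r| ^ n) := hrad |r| (by rwa [abs_abs])
    have h2 : Summable (fun n => C * (p n * |r| ^ n)) := h1.mul_left C
    refine Summable.of_abs (h2.of_nonneg_of_le (fun n => abs_nonneg _) fun n => ?_)
    calc |a n * r ^ n| = |a n| * |r| ^ n := by rw [abs_mul, abs_pow]
      _ ≤ C * p n * |r| ^ n :=
          mul_le_mul_of_nonneg_right (haC n) (pow_nonneg (abs_nonneg r) n)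
      _ = C * (p n * |r| ^ n) := by ring
  refine ⟨hsum, ?_⟩
  -- positivity of `P r` for `r ∈ (0,1)`
  have habs : ∀ r : ℝ, 0 < r → r < 1 → |r| < 1 := fun r h0 h1 => by
    rwa [abs_of_pos h0]
  have hPpos : ∀ r : ℝ, 0 < r → r < 1 → 0 < ∑' n, p n * r ^ n := by
    intro r h0 h1
    have hs := hrad r (habs r h0 h1)
    exact Summable.tsum_pos hs (fun n => mul_nonneg (hpos n).le (pow_nonneg h0.le n)) 0
      (by simpa using hpos 0)
  -- `P r → ∞` as `r → 1⁻`
  have hPtop : Tendsto (fun r : ℝ => ∑' n, p n * r ^ n)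
      (nhdsWithin 1 (Set.Iio 1)) atTop := by
    rw [tendsto_atTop]
    intro M
    have hpart : Tendsto (fun n => ∑ i ∈ range n, p i) atTop atTop :=
      (not_summable_iff_tendsto_nat_atTop_of_nonneg (fun i => (hpos i).le)).1 hdiv
    obtain ⟨N, hN⟩ := (tendsto_atTop.1 hpart (M + 1)).exists
    have hcont : ContinuousAt (fun r : ℝ => ∑ i ∈ range N, p i * r ^ i) 1 := by
      exact (continuous_finset_sum _ fun i _ => by continuity).continuousAt
    have hval : M < ∑ i ∈ range N, p i * (1:ℝ) ^ i := by
      simp only [one_pow, mul_one]; linarith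
    have hev : ∀ᶠ r in nhds (1:ℝ), M < ∑ i ∈ range N, p i * r ^ i :=
      hcont.eventually (eventually_gt_nhds hval)
    have h0 : ∀ᶠ r in nhdsWithin (1:ℝ) (Set.Iio 1), 0 < r :=
      eventually_nhdsWithin_of_eventually_nhds (eventually_gt_nhds one_pos)
    have h1 : ∀ᶠ r in nhdsWithin (1:ℝ) (Set.Iio 1), r < 1 :=
      eventually_mem_nhdsWithin.mono fun r hr => hr
    filter_upwards [eventually_nhdsWithin_of_eventually_nhds hev, h0, h1]
      with r hr hr0 hr1
    have hs := hrad r (habs r hr0 hr1)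
    have := Summable.sum_le_tsum (range N)
      (fun i _ => mul_nonneg (hpos i).le (pow_nonneg hr0.le i)) hs
    linarith
  -- main estimate
  rw [Metric.tendsto_nhds]
  intro ε hε
  have hε' : 0 < ε / 2 := half_pos hε
  obtain ⟨N, hN⟩ := Metric.tendsto_atTop.1 hlim (ε / 2) hε'
  set e : ℕ → ℝ := fun n => a n / p n - s with he
  set B : ℝ := ∑ i ∈ range N, p i * |e i| with hB
  have hB0 : 0 ≤ B :=
    Finset.sum_nonneg fun i _ => mul_nonneg (hpos i).le (abs_nonneg _)
  have h0 : ∀ᶠ r in nhdsWithin (1:ℝ) (Set.Iio 1), 0 < r :=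
    eventually_nhdsWithin_of_eventually_nhds (eventually_gt_nhds one_pos)
  have h1 : ∀ᶠ r in nhdsWithin (1:ℝ) (Set.Iio 1), r < 1 :=
    eventually_mem_nhdsWithin.mono fun r hr => hr
  filter_upwards [h0, h1, hPtop.eventually_ge_atTop (B / (ε / 2) + 1)]
    with r hr0 hr1 hrP
  have hr : |r| < 1 := habs r hr0 hr1
  have hSa := hsum r hr
  have hSp := hrad r hr
  have hP := hPpos r hr0 hr1
  set P : ℝ := ∑' n, p n * r ^ n with hPdef
  set A : ℝ := ∑' n, a n * r ^ n with hAdef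
  -- rewrite `a n * r^n - s * (p n * r^n)` as `p n * e n * r^n`
  have hfun : (fun n => p n * e n * r ^ n)
      = fun n => a n * r ^ n - s * (p n * r ^ n) := by
    funext n
    have hpn := (hpos n).ne'
    simp only [he]
    field_simp
  have hSe : Summable (fun n => p n * e n * r ^ n) := by
    rw [hfun]; exact hSa.sub (hSp.mul_left s)
  have hts : ∑' n, p n * e n * r ^ n = A - s * P := by
    rw [hfun, Summable.tsum_sub hSa (hSp.mul_left s), tsum_mul_left]
  -- bound the tsum
  set g : ℕ → ℝ := fun n => (if n < N then p n * |e n| else 0) + ε / 2 * (p n * r ^ n)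
    with hg
  have hgsum1 : Summable (fun n => if n < N then p n * |e n| else 0) := by
    refine summable_of_ne_finset_zero (s := range N) fun n hn => ?_
    rw [if_neg (by simpa using hn)]
  have hgsum : Summable g := hgsum1.add (hSp.mul_left (ε / 2))
  have hle : ∀ n, |p n * e n * r ^ n| ≤ g n := by
    intro n
    have hrn0 : (0:ℝ) ≤ r ^ n := pow_nonneg hr0.le n
    have hrn1 : r ^ n ≤ 1 := pow_le_one₀ hr0.le hr1.le
    have habs' : |p n * e n * r ^ n| = p n * |e n| * r ^ n := by
      rw [abs_mul, abs_mul, abs_of_pos (hpos n), abs_of_nonneg hrn0]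
    rw [habs', hg]; dsimp only
    by_cases hn : n < N
    · rw [if_pos hn]
      have : p n * |e n| * r ^ n ≤ p n * |e n| * 1 :=
        mul_le_mul_of_nonneg_left hrn1 (mul_nonneg (hpos n).le (abs_nonneg _))
      have hnn : 0 ≤ ε / 2 * (p n * r ^ n) :=
        mul_nonneg hε'.le (mul_nonneg (hpos n).le hrn0)
      linarith
    · rw [if_neg hn]
      push_neg at hn
      have hen : |e n| ≤ ε / 2 := by
        have := hN n hn
        rw [Real.dist_eq] at this
        exact this.le
      have : p n * |e n| * r ^ n ≤ p n * (ε / 2) * r ^ n := by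
        apply mul_le_mul_of_nonneg_right _ hrn0
        exact mul_le_mul_of_nonneg_left hen (hpos n).le
      linarith [this]
  have htsg : ∑' n, g n = B + ε / 2 * P := by
    rw [hg, Summable.tsum_add hgsum1 (hSp.mul_left (ε / 2)), tsum_mul_left, hB]
    congr 1
    rw [tsum_eq_sum (s := range N) (fun n hn => by rw [if_neg (by simpa using hn)])]
    exact Finset.sum_congr rfl fun i hi => by rw [if_pos (mem_range.mp hi)]
  have hbound : |A - s * P| ≤ B + ε / 2 * P := by
    rw [← hts, ← htsg]
    calc |∑' n, p n * e n * r ^ n| ≤ ∑' n, |p n * e n * r ^ n| := by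
          simpa only [Real.norm_eq_abs] using
            norm_tsum_le_tsum_norm (f := fun n => p n * e n * r ^ n)
              (by simpa only [Real.norm_eq_abs] using hSe.abs)
      _ ≤ ∑' n, g n := Summable.tsum_le_tsum hle hSe.abs hgsum
  -- conclude
  have hdiv' : A / P - s = (A - s * P) / P := by field_simp
  rw [Real.dist_eq, hdiv', abs_div, abs_of_pos hP]
  have hBP : B < ε / 2 * P := by
    have : ε / 2 * (B / (ε / 2) + 1) ≤ ε / 2 * P :=
      mul_le_mul_of_nonneg_left hrP hε'.le
    have heq : ε / 2 * (B / (ε / 2) + 1) = B + ε / 2 := by field_simp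
    linarith
  rw [div_lt_iff₀ hP]
  calc |A - s * P| ≤ B + ε / 2 * P := hbound
    _ < ε / 2 * P + ε / 2 * P := by linarith
    _ = ε * P := by ring
end
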